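/- Every graph automorphism ψ of the replacement graph Γ(S) maps V(S) onto itself, its restriction to V(S) is an automorphism of the I-system S, and ψ is completely determined by this restriction; moreover, the restriction map is a group isomorphism Aut(Γ(S)) ≅ Aut_I(S). -/

import Mathlib

/-- The automorphism group of a binary relational system `R` over a label set `I`,
as a subgroup of the permutations of the vertex set. -/
def relAut {I V : Type*} (R : I → V → V → Prop) : Subgroup (Equiv.Perm V) where
  carrier := {e | ∀ i v w, R i v w ↔ R i (e v) (e w)}
  one_mem' := by intro i v w; simp
  mul_mem' := by
    intro a b ha hb i v w
    simpa [Equiv.Perm.mul_apply] using (hb i v w).trans (ha i (b v) (b w))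
  inv_mem' := by
    intro a ha i v w
    simpa [Equiv.Perm.coe_inv, Equiv.apply_symm_apply] using (ha i (a⁻¹ v) (a⁻¹ w)).symm

/-- The automorphism group of a morphism of binary relational systems, i.e. the subgroup of
`Aut(R₁) × Aut(R₂)` of pairs commuting with `f`. -/
def relArrowAut {I V₁ V₂ : Type*} (R₁ : I → V₁ → V₁ → Prop) (R₂ : I → V₂ → V₂ → Prop)
    (f : V₁ → V₂) : Subgroup (relAut R₁ × relAut R₂) where
  carrier := {p | ∀ v, f ((p.1 : Equiv.Perm V₁) v) = (p.2 : Equiv.Perm V₂) (f v)}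
  one_mem' := by intro v; simp
  mul_mem' := by
    intro a b ha hb v
    simp only [Prod.fst_mul, Prod.snd_mul, Subgroup.coe_mul, Equiv.Perm.mul_apply]
    rw [ha ((b.1 : Equiv.Perm V₁) v), hb v]
  inv_mem' := by
    intro a ha v
    simp only [Prod.fst_inv, Prod.snd_inv, Subgroup.coe_inv]
    have h := ha ((a.1 : Equiv.Perm V₁)⁻¹ v)
    simp only [Equiv.Perm.coe_inv, Equiv.apply_symm_apply] at h
    rw [h]
    simp only [Equiv.Perm.coe_inv, Equiv.symm_apply_apply]

/-- The automorphism group of a simple graph, as a subgroup of the permutations of the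
vertex set. -/
def graphAut {V : Type*} (G : SimpleGraph V) : Subgroup (Equiv.Perm V) where
  carrier := {e | ∀ v w, G.Adj v w ↔ G.Adj (e v) (e w)}
  one_mem' := by intro v w; simp
  mul_mem' := by
    intro a b ha hb v w
    simpa [Equiv.Perm.mul_apply] using (hb v w).trans (ha (b v) (b w))
  inv_mem' := by
    intro a ha v w
    simpa [Equiv.Perm.coe_inv, Equiv.apply_symm_apply] using (ha (a⁻¹ v) (a⁻¹ w)).symm

/-- The automorphism group of a graph homomorphism, i.e. the subgroup of
`Aut(Γ₁) × Aut(Γ₂)` of pairs commuting with `f`. -/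
def graphArrowAut {V₁ V₂ : Type*} (Γ₁ : SimpleGraph V₁) (Γ₂ : SimpleGraph V₂)
    (f : V₁ → V₂) : Subgroup (graphAut Γ₁ × graphAut Γ₂) where
  carrier := {p | ∀ v, f ((p.1 : Equiv.Perm V₁) v) = (p.2 : Equiv.Perm V₂) (f v)}
  one_mem' := by intro v; simp
  mul_mem' := by
    intro a b ha hb v
    simp only [Prod.fst_mul, Prod.snd_mul, Subgroup.coe_mul, Equiv.Perm.mul_apply]
    rw [ha ((b.1 : Equiv.Perm V₁) v), hb v]
  inv_mem' := by
    intro a ha v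
    simp only [Prod.fst_inv, Prod.snd_inv, Subgroup.coe_inv]
    have h := ha ((a.1 : Equiv.Perm V₁)⁻¹ v)
    simp only [Equiv.Perm.coe_inv, Equiv.apply_symm_apply] at h
    rw [h]
    simp only [Equiv.Perm.coe_inv, Equiv.symm_apply_apply]

universe u

/-- The outdegree of a vertex in a binary relational system: the cardinality of the
disjoint union over the labels `i ∈ I` of the sets `{w | (v, w) ∈ R_i}`. -/
def relOutDeg {I V : Type u} (R : I → V → V → Prop) (v : V) : Cardinal.{u} :=
  Cardinal.mk (Σ i : I, {w : V // R i v w})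

/-- The indegree of a vertex in a binary relational system: the cardinality of the
disjoint union over the labels `i ∈ I` of the sets `{w | (w, v) ∈ R_i}`. -/
def relInDeg {I V : Type u} (R : I → V → V → Prop) (v : V) : Cardinal.{u} :=
  Cardinal.mk (Σ i : I, {w : V // R i w v})

/-- The degree of a vertex in a binary relational system. -/
def relDeg {I V : Type u} (R : I → V → V → Prop) (v : V) : Cardinal.{u} :=
  relOutDeg R v + relInDeg R v


section Replacement

variable {I V : Type u} (S : I → V → V → Prop)
variable (X : I → Type u) (Gr : ∀ i, SimpleGraph (X i)) (p : ∀ i, X i)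

/-- The vertex set of the replacement graph `Γ(S)`: the vertices of `S` together with, for
each edge `(v, w)` of label `i`, a copy of the vertices of `R_i` (the `some x` vertices)
and an extra vertex `r_i^{(v,w)}` (the `none` vertex). -/
abbrev RepVert (X : I → Type u) := V ⊕ Σ i : I, {e : V × V // S i e.1 e.2} × Option (X i)

/-- The adjacency relation of the replacement graph, consisting of: the edges of each copy
`R_i^{(v,w)}`, and the connecting edges `{v, r_i^{(v,w)}}`, `{r_i^{(v,w)}, p_i^{(v,w)}}` and
`{p_i^{(v,w)}, w}` for each edge `(v, w)` of label `i` of `S`. -/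
inductive RepAdj : RepVert S X → RepVert S X → Prop
  | copy (i : I) (e : {e : V × V // S i e.1 e.2}) {x y : X i} :
      (Gr i).Adj x y → RepAdj (.inr ⟨i, e, some x⟩) (.inr ⟨i, e, some y⟩)
  | rp (i : I) (e : {e : V × V // S i e.1 e.2}) :
      RepAdj (.inr ⟨i, e, none⟩) (.inr ⟨i, e, some (p i)⟩)
  | pr (i : I) (e : {e : V × V // S i e.1 e.2}) :
      RepAdj (.inr ⟨i, e, some (p i)⟩) (.inr ⟨i, e, none⟩)
  | vr (i : I) (e : {e : V × V // S i e.1 e.2}) :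
      RepAdj (.inl e.val.1) (.inr ⟨i, e, none⟩)
  | rv (i : I) (e : {e : V × V // S i e.1 e.2}) :
      RepAdj (.inr ⟨i, e, none⟩) (.inl e.val.1)
  | pw (i : I) (e : {e : V × V // S i e.1 e.2}) :
      RepAdj (.inr ⟨i, e, some (p i)⟩) (.inl e.val.2)
  | wp (i : I) (e : {e : V × V // S i e.1 e.2}) :
      RepAdj (.inl e.val.2) (.inr ⟨i, e, some (p i)⟩)

/-- The replacement graph `Γ(S)` obtained from the `I`-system `S` by the replacement
operation with the family of graphs `(R_i, p_i)`. -/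
def repGraph : SimpleGraph (RepVert S X) where
  Adj := RepAdj S X Gr p
  symm := by
    constructor
    intro a b h
    cases h with
    | copy i e hxy => exact .copy i e ((Gr i).symm.symm _ _ hxy)
    | rp i e => exact .pr i e
    | pr i e => exact .rp i e
    | vr i e => exact .rv i e
    | rv i e => exact .vr i e
    | pw i e => exact .wp i e
    | wp i e => exact .pw i e
  loopless := by
    constructor
    intro a h
    cases h with
    | copy i e hxy => exact (Gr i).loopless.irrefl _ hxy

end Replacement

namespace RepAux

open Sum

section Aux
variable {I V : Type u} {S : I → V → V → Prop} {X : I → Type u} {Gr : ∀ i, SimpleGraph (X i)}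
  {p : ∀ i, X i}

lemma adj_inl_inl {v w : V} (h : (repGraph S X Gr p).Adj (.inl v) (.inl w)) : False := by
  cases h

lemma adj_inl_none {v : V} {i : I} {e : {e : V × V // S i e.1 e.2}}
    (h : (repGraph S X Gr p).Adj (.inl v) (.inr ⟨i, e, none⟩)) : v = e.val.1 := by
  cases h; rfl

lemma adj_inl_some {v : V} {i : I} {e : {e : V × V // S i e.1 e.2}} {x : X i}
    (h : (repGraph S X Gr p).Adj (.inl v) (.inr ⟨i, e, some x⟩)) :
    v = e.val.2 ∧ x = p i := by
  cases h; exact ⟨rfl, rfl⟩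

lemma adj_none {i : I} {e : {e : V × V // S i e.1 e.2}} {a : RepVert S X}
    (h : (repGraph S X Gr p).Adj (.inr ⟨i, e, none⟩) a) :
    a = .inl e.val.1 ∨ a = .inr ⟨i, e, some (p i)⟩ := by
  cases h
  · exact Or.inr rfl
  · exact Or.inl rfl

lemma adj_some {i : I} {e : {e : V × V // S i e.1 e.2}} {x : X i} {a : RepVert S X}
    (h : (repGraph S X Gr p).Adj (.inr ⟨i, e, some x⟩) a) :
    (∃ y : X i, (Gr i).Adj x y ∧ a = .inr ⟨i, e, some y⟩) ∨
      (x = p i ∧ (a = .inr ⟨i, e, none⟩ ∨ a = .inl e.val.2)) := by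
  cases h with
  | copy i e hxy => exact Or.inl ⟨_, hxy, rfl⟩
  | pr i e => exact Or.inr ⟨rfl, Or.inl rfl⟩
  | pw i e => exact Or.inr ⟨rfl, Or.inr rfl⟩

end Aux

section Aux
variable {I V : Type u} {S : I → V → V → Prop} {X : I → Type u} {Gr : ∀ i, SimpleGraph (X i)}
  {p : ∀ i, X i}

/-- Cardinality of the neighbor set of an `r`-vertex is 2. -/
lemma card_none (i : I) (e : {e : V × V // S i e.1 e.2}) :
    Cardinal.mk ((repGraph S X Gr p).neighborSet (.inr ⟨i, e, none⟩)) = 2 := by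
  have hset : (repGraph S X Gr p).neighborSet (.inr ⟨i, e, none⟩)
      = {Sum.inl e.val.1, Sum.inr ⟨i, e, some (p i)⟩} := by
    ext a
    constructor
    · exact fun h => adj_none h
    · rintro (rfl | rfl)
      · exact RepAdj.rv i e
      · exact RepAdj.rp i e
  rw [hset]
  rw [Cardinal.mk_insert (by simp), Cardinal.mk_singleton]
  norm_num

/-- Cardinality of the neighbor set of a `p`-vertex is 3. -/
lemma card_pvert (hp : ∀ i, Cardinal.mk ((Gr i).neighborSet (p i)) = 1)
    (i : I) (e : {e : V × V // S i e.1 e.2}) :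
    Cardinal.mk ((repGraph S X Gr p).neighborSet (.inr ⟨i, e, some (p i)⟩)) = 3 := by
  have hset : (repGraph S X Gr p).neighborSet (.inr ⟨i, e, some (p i)⟩)
      = insert (Sum.inl e.val.2) (insert (Sum.inr ⟨i, e, none⟩)
        ((fun y : X i => (Sum.inr ⟨i, e, some y⟩ : RepVert S X)) '' (Gr i).neighborSet (p i))) := by
    ext a
    constructor
    · intro h
      rcases adj_some h with ⟨y, hy, rfl⟩ | ⟨_, rfl | rfl⟩
      · exact Or.inr (Or.inr ⟨y, hy, rfl⟩)
      · exact Or.inr (Or.inl rfl)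
      · exact Or.inl rfl
    · rintro (rfl | rfl | ⟨y, hy, rfl⟩)
      · exact RepAdj.pw i e
      · exact RepAdj.pr i e
      · exact RepAdj.copy i e hy
  rw [hset]
  have hinj : Function.Injective (fun y : X i => (Sum.inr ⟨i, e, some y⟩ : RepVert S X)) := by
    intro a b hab
    simpa using hab
  rw [Cardinal.mk_insert, Cardinal.mk_insert, Cardinal.mk_image_eq hinj, hp i]
  · norm_num
  · rintro ⟨y, hy, h⟩
    simp at h
  · rintro (h | ⟨y, hy, h⟩) <;> simp at h

/-- The neighbor set of a non-`p` copy vertex has cardinality `> α`. -/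
lemma card_big {α : Cardinal.{u}}
    (hbig : ∀ (i : I) (x : X i), x ≠ p i → α < Cardinal.mk ((Gr i).neighborSet x))
    (i : I) (e : {e : V × V // S i e.1 e.2}) {x : X i} (hx : x ≠ p i) :
    α < Cardinal.mk ((repGraph S X Gr p).neighborSet (.inr ⟨i, e, some x⟩)) := by
  refine lt_of_lt_of_le (hbig i x hx) (Cardinal.mk_le_of_injective (f := fun y =>
    (⟨Sum.inr ⟨i, e, some y.1⟩, RepAdj.copy i e y.2⟩ :
      (repGraph S X Gr p).neighborSet (.inr ⟨i, e, some x⟩))) ?_)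
  intro a b hab
  simp only [Subtype.mk.injEq, Sum.inr.injEq, Sigma.mk.inj_iff, heq_eq_eq, Prod.mk.injEq,
    Option.some.injEq, true_and] at hab
  exact Subtype.ext (by simpa using congrArg Subtype.val hab)

end Aux
section Aux3
variable {I V : Type u} {S : I → V → V → Prop} {X : I → Type u} {Gr : ∀ i, SimpleGraph (X i)}
  {p : ∀ i, X i}

/-- The map from the "degree type" of `v` in `S` to the vertices of `Γ(S)`. -/
def degMap (S : I → V → V → Prop) (X : I → Type u) (p : ∀ i, X i) (v : V) :
    (Σ i : I, {w : V // S i v w}) ⊕ (Σ i : I, {w : V // S i w v}) → RepVert S X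
  | .inl ⟨i, w, h⟩ => .inr ⟨i, ⟨(v, w), h⟩, none⟩
  | .inr ⟨i, w, h⟩ => .inr ⟨i, ⟨(w, v), h⟩, some (p i)⟩

lemma degMap_injective (v : V) : Function.Injective (degMap S X p v) := by
  rintro (⟨i, w, h⟩ | ⟨i, w, h⟩) (⟨j, u, g⟩ | ⟨j, u, g⟩) hab <;>
  · simp only [degMap, Sum.inr.injEq, Sigma.mk.inj_iff] at hab
    obtain ⟨rfl, hab⟩ := hab
    obtain hab := eq_of_heq hab
    simp at hab
    all_goals (subst hab; rfl)

lemma range_degMap (v : V) :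
    Set.range (degMap S X p v) = (repGraph S X Gr p).neighborSet (.inl v) := by
  ext a
  constructor
  · rintro ⟨(⟨i, w, h⟩ | ⟨i, w, h⟩), rfl⟩
    · exact RepAdj.vr i ⟨(v, w), h⟩
    · exact RepAdj.wp i ⟨(w, v), h⟩
  · intro h
    match a with
    | .inl w => exact absurd h adj_inl_inl
    | .inr ⟨i, e, none⟩ =>
        obtain rfl := adj_inl_none h
        exact ⟨.inl ⟨i, e.val.2, e.2⟩, rfl⟩
    | .inr ⟨i, e, some x⟩ =>
        obtain ⟨rfl, rfl⟩ := adj_inl_some h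
        exact ⟨.inr ⟨i, e.val.1, e.2⟩, rfl⟩

lemma card_inl (v : V) :
    Cardinal.mk ((repGraph S X Gr p).neighborSet (.inl v)) = relDeg S v := by
  rw [← range_degMap (Gr := Gr) v, Cardinal.mk_range_eq _ (degMap_injective v),
    relDeg, relOutDeg, relInDeg, Cardinal.add_def]

end Aux3
section Aux4
variable {I V : Type u} {S : I → V → V → Prop} {X : I → Type u} {Gr : ∀ i, SimpleGraph (X i)}
  {p : ∀ i, X i}

lemma aut_adj (ψ : graphAut (repGraph S X Gr p)) {a b : RepVert S X} :
    (repGraph S X Gr p).Adj a b ↔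
      (repGraph S X Gr p).Adj ((ψ : Equiv.Perm (RepVert S X)) a)
        ((ψ : Equiv.Perm (RepVert S X)) b) :=
  ψ.2 a b

lemma card_nb_aut (ψ : graphAut (repGraph S X Gr p)) (a : RepVert S X) :
    Cardinal.mk ((repGraph S X Gr p).neighborSet ((ψ : Equiv.Perm (RepVert S X)) a))
      = Cardinal.mk ((repGraph S X Gr p).neighborSet a) := by
  refine Cardinal.mk_congr ⟨fun b => ⟨(ψ : Equiv.Perm (RepVert S X)).symm b.1, ?_⟩,
    fun b => ⟨(ψ : Equiv.Perm (RepVert S X)) b.1, (aut_adj ψ).mp b.2⟩, ?_, ?_⟩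
  · exact (aut_adj ψ).mpr (by rw [Equiv.apply_symm_apply]; exact b.2)
  · intro b; ext : 1; simp
  · intro b; ext : 1; simp

section Classify
variable {α : Cardinal.{u}} (hα : 4 ≤ α)
  (hp : ∀ i, Cardinal.mk ((Gr i).neighborSet (p i)) = 1)
  (hbig : ∀ (i : I) (x : X i), x ≠ p i → α < Cardinal.mk ((Gr i).neighborSet x))
  (hdeg : ∀ v : V, 4 ≤ relDeg S v ∧ relDeg S v ≤ α)

include hα hp hbig hdeg

/-- An automorphism of the replacement graph maps original vertices to original vertices. -/
lemma aut_inl (ψ : graphAut (repGraph S X Gr p)) (v : V) :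
    ∃ w : V, (ψ : Equiv.Perm (RepVert S X)) (Sum.inl v) = Sum.inl w := by
  have hc : Cardinal.mk ((repGraph S X Gr p).neighborSet
      ((ψ : Equiv.Perm (RepVert S X)) (Sum.inl v))) = relDeg S v := by
    rw [card_nb_aut, card_inl]
  match hv : (ψ : Equiv.Perm (RepVert S X)) (Sum.inl v) with
  | .inl w => exact ⟨w, rfl⟩
  | .inr ⟨i, e, none⟩ =>
      rw [hv, card_none] at hc
      have h4 := (hdeg v).1
      rw [← hc] at h4
      norm_num at h4
  | .inr ⟨i, e, some x⟩ =>
      by_cases hx : x = p i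
      · subst hx
        rw [hv, card_pvert hp] at hc
        have h4 := (hdeg v).1
        rw [← hc] at h4
        norm_num at h4
      · exfalso
        have h1 := card_big (p := p) hbig i e hx
        rw [← hv, hc] at h1
        exact absurd ((hdeg v).2.trans_lt h1) (lt_irrefl _)

/-- An automorphism maps `r`-vertices to `r`-vertices. -/
lemma aut_none (ψ : graphAut (repGraph S X Gr p)) (i : I) (e : {e : V × V // S i e.1 e.2}) :
    ∃ (j : I) (f : {e : V × V // S j e.1 e.2}),
      (ψ : Equiv.Perm (RepVert S X)) (Sum.inr ⟨i, e, none⟩) = Sum.inr ⟨j, f, none⟩ := by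
  have hc : Cardinal.mk ((repGraph S X Gr p).neighborSet
      ((ψ : Equiv.Perm (RepVert S X)) (Sum.inr ⟨i, e, none⟩))) = 2 := by
    rw [card_nb_aut, card_none]
  match hv : (ψ : Equiv.Perm (RepVert S X)) (Sum.inr ⟨i, e, none⟩) with
  | .inl w =>
      rw [hv, card_inl] at hc
      have h4 := (hdeg w).1
      rw [hc] at h4
      norm_num at h4
  | .inr ⟨j, f, none⟩ => exact ⟨j, f, rfl⟩
  | .inr ⟨j, f, some x⟩ =>
      by_cases hx : x = p j
      · subst hx
        rw [hv, card_pvert hp] at hc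
        norm_num at hc
      · exfalso
        have h1 := card_big (p := p) hbig j f hx
        rw [← hv, hc] at h1
        have : α < 4 := h1.trans_le (by norm_num)
        exact absurd (hα.trans_lt this) (lt_irrefl _)

/-- An automorphism maps `p`-vertices to `p`-vertices. -/
lemma aut_pvert (ψ : graphAut (repGraph S X Gr p)) (i : I) (e : {e : V × V // S i e.1 e.2}) :
    ∃ (j : I) (f : {e : V × V // S j e.1 e.2}),
      (ψ : Equiv.Perm (RepVert S X)) (Sum.inr ⟨i, e, some (p i)⟩)
        = Sum.inr ⟨j, f, some (p j)⟩ := by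
  have hc : Cardinal.mk ((repGraph S X Gr p).neighborSet
      ((ψ : Equiv.Perm (RepVert S X)) (Sum.inr ⟨i, e, some (p i)⟩))) = 3 := by
    rw [card_nb_aut, card_pvert hp]
  match hv : (ψ : Equiv.Perm (RepVert S X)) (Sum.inr ⟨i, e, some (p i)⟩) with
  | .inl w =>
      rw [hv, card_inl] at hc
      have h4 := (hdeg w).1
      rw [hc] at h4
      norm_num at h4
  | .inr ⟨j, f, none⟩ =>
      rw [hv, card_none] at hc
      norm_num at hc
  | .inr ⟨j, f, some x⟩ =>
      by_cases hx : x = p j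
      · subst hx; exact ⟨j, f, rfl⟩
      · exfalso
        have h1 := card_big (p := p) hbig j f hx
        rw [← hv, hc] at h1
        have : α < 4 := h1.trans_le (by norm_num)
        exact absurd (hα.trans_lt this) (lt_irrefl _)

/-- An automorphism maps big copy vertices to big copy vertices. -/
lemma aut_big (ψ : graphAut (repGraph S X Gr p)) (i : I) (e : {e : V × V // S i e.1 e.2})
    {x : X i} (hx : x ≠ p i) :
    ∃ (j : I) (f : {e : V × V // S j e.1 e.2}) (y : X j), y ≠ p j ∧
      (ψ : Equiv.Perm (RepVert S X)) (Sum.inr ⟨i, e, some x⟩) = Sum.inr ⟨j, f, some y⟩ := by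
  have hc : α < Cardinal.mk ((repGraph S X Gr p).neighborSet
      ((ψ : Equiv.Perm (RepVert S X)) (Sum.inr ⟨i, e, some x⟩))) := by
    rw [card_nb_aut]
    exact card_big (p := p) hbig i e hx
  match hv : (ψ : Equiv.Perm (RepVert S X)) (Sum.inr ⟨i, e, some x⟩) with
  | .inl w =>
      rw [hv, card_inl] at hc
      exact absurd (hc.trans_le (hdeg w).2) (lt_irrefl _)
  | .inr ⟨j, f, none⟩ =>
      rw [hv, card_none] at hc
      have : α < 4 := hc.trans_le (by norm_num)
      exact absurd (hα.trans_lt this) (lt_irrefl _)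
  | .inr ⟨j, f, some y⟩ =>
      by_cases hy : y = p j
      · subst hy
        rw [hv, card_pvert hp] at hc
        have : α < 4 := hc.trans_le (by norm_num)
        exact absurd (hα.trans_lt this) (lt_irrefl _)
      · exact ⟨j, f, y, hy, rfl⟩

end Classify
end Aux4
section Aux5
variable {I V : Type u} {S : I → V → V → Prop} {X : I → Type u} {Gr : ∀ i, SimpleGraph (X i)}
  {p : ∀ i, X i}

lemma adj_inr_inr {i j : I} {e : {e : V × V // S i e.1 e.2}} {f : {e : V × V // S j e.1 e.2}}
    {oa : Option (X i)} {ob : Option (X j)}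
    (h : (repGraph S X Gr p).Adj (.inr ⟨i, e, oa⟩) (.inr ⟨j, f, ob⟩)) :
    (⟨i, e⟩ : Σ i : I, {e : V × V // S i e.1 e.2}) = ⟨j, f⟩ := by
  cases h <;> rfl

section Classify
variable {α : Cardinal.{u}} (hα : 4 ≤ α)
  (hconn : ∀ i, (Gr i).Connected)
  (hp : ∀ i, Cardinal.mk ((Gr i).neighborSet (p i)) = 1)
  (hbig : ∀ (i : I) (x : X i), x ≠ p i → α < Cardinal.mk ((Gr i).neighborSet x))
  (hdeg : ∀ v : V, 4 ≤ relDeg S v ∧ relDeg S v ≤ α)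

include hα hconn hp hbig hdeg

/-- Copy vertices of a gadget are mapped into the gadget determined by the image of the
`r`-vertex. -/
lemma gadget_some (ψ : graphAut (repGraph S X Gr p)) {i j : I}
    {e : {e : V × V // S i e.1 e.2}} {f : {e : V × V // S j e.1 e.2}}
    (hr : (ψ : Equiv.Perm (RepVert S X)) (Sum.inr ⟨i, e, none⟩) = Sum.inr ⟨j, f, none⟩)
    (x : X i) :
    ∃ y : X j, (ψ : Equiv.Perm (RepVert S X)) (Sum.inr ⟨i, e, some x⟩)
      = Sum.inr ⟨j, f, some y⟩ := by
  -- image of any copy vertex is a copy vertex of some gadget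
  have himg : ∀ a : X i, ∃ (j' : I) (f' : {e : V × V // S j' e.1 e.2}) (y : X j'),
      (ψ : Equiv.Perm (RepVert S X)) (Sum.inr ⟨i, e, some a⟩) = Sum.inr ⟨j', f', some y⟩ := by
    intro a
    by_cases ha : a = p i
    · subst ha
      obtain ⟨j', f', h'⟩ := aut_pvert hα hp hbig hdeg ψ i e
      exact ⟨j', f', p j', h'⟩
    · obtain ⟨j', f', y, _, h'⟩ := aut_big hα hp hbig hdeg ψ i e ha
      exact ⟨j', f', y, h'⟩
  -- base case: the special point
  have hbase : ∃ y : X j, (ψ : Equiv.Perm (RepVert S X)) (Sum.inr ⟨i, e, some (p i)⟩)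
      = Sum.inr ⟨j, f, some y⟩ := by
    obtain ⟨j', f', y, h'⟩ := himg (p i)
    have hadj := (aut_adj ψ).mp (RepAdj.rp i e : (repGraph S X Gr p).Adj _ _)
    rw [hr, h'] at hadj
    obtain ⟨rfl, h2⟩ := Sigma.mk.inj_iff.mp (adj_inr_inr hadj)
    obtain rfl := eq_of_heq h2
    exact ⟨y, h'⟩
  -- inductive step along an edge of the copy
  have hstep : ∀ a b : X i, (Gr i).Adj a b →
      (∃ y : X j, (ψ : Equiv.Perm (RepVert S X)) (Sum.inr ⟨i, e, some a⟩)
        = Sum.inr ⟨j, f, some y⟩) →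
      ∃ y : X j, (ψ : Equiv.Perm (RepVert S X)) (Sum.inr ⟨i, e, some b⟩)
        = Sum.inr ⟨j, f, some y⟩ := by
    intro a b hab ⟨ya, hya⟩
    obtain ⟨j', f', y, h'⟩ := himg b
    have hadj := (aut_adj ψ).mp (RepAdj.copy i e hab : (repGraph S X Gr p).Adj _ _)
    rw [hya, h'] at hadj
    obtain ⟨rfl, h2⟩ := Sigma.mk.inj_iff.mp (adj_inr_inr hadj)
    obtain rfl := eq_of_heq h2
    exact ⟨y, h'⟩
  -- walk induction
  have key : ∀ a b : X i, (Gr i).Walk a b →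
      (∃ y : X j, (ψ : Equiv.Perm (RepVert S X)) (Sum.inr ⟨i, e, some a⟩)
        = Sum.inr ⟨j, f, some y⟩) →
      ∃ y : X j, (ψ : Equiv.Perm (RepVert S X)) (Sum.inr ⟨i, e, some b⟩)
        = Sum.inr ⟨j, f, some y⟩ := by
    intro a b w
    induction w with
    | nil => exact id
    | cons hadj w ih => exact fun ha => ih (hstep _ _ hadj ha)
  obtain ⟨w⟩ := (hconn i).preconnected (p i) x
  exact key _ _ w hbase

end Classify
end Aux5
section Aux6
variable {I V : Type u} {S : I → V → V → Prop} {X : I → Type u} {Gr : ∀ i, SimpleGraph (X i)}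
  {p : ∀ i, X i}

section Classify
variable {α : Cardinal.{u}} (hα : 4 ≤ α)
  (hconn : ∀ i, (Gr i).Connected)
  (hp : ∀ i, Cardinal.mk ((Gr i).neighborSet (p i)) = 1)
  (hbig : ∀ (i : I) (x : X i), x ≠ p i → α < Cardinal.mk ((Gr i).neighborSet x))
  (hrigid : ∀ (i : I) (φ : Gr i ≃g Gr i) (x : X i), φ x = x)
  (hdist : ∀ i j : I, i ≠ j → IsEmpty (Gr i ≃g Gr j))
  (hdeg : ∀ v : V, 4 ≤ relDeg S v ∧ relDeg S v ≤ α)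

include hα hconn hp hbig hrigid hdist hdeg

/-- The master gadget lemma: each gadget is mapped onto a gadget with the same label,
identically on the copy, and the endpoints go to the endpoints. -/
lemma gadget_master (ψ : graphAut (repGraph S X Gr p)) (i : I)
    (e : {e : V × V // S i e.1 e.2}) :
    ∃ f : {e : V × V // S i e.1 e.2},
      (ψ : Equiv.Perm (RepVert S X)) (Sum.inr ⟨i, e, none⟩) = Sum.inr ⟨i, f, none⟩ ∧
      (∀ x : X i, (ψ : Equiv.Perm (RepVert S X)) (Sum.inr ⟨i, e, some x⟩)
        = Sum.inr ⟨i, f, some x⟩) ∧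
      (ψ : Equiv.Perm (RepVert S X)) (Sum.inl e.val.1) = Sum.inl f.val.1 ∧
      (ψ : Equiv.Perm (RepVert S X)) (Sum.inl e.val.2) = Sum.inl f.val.2 := by
  obtain ⟨j, f, hr⟩ := aut_none hα hp hbig hdeg ψ i e
  -- the inverse automorphism and its r-vertex equation
  have hr' : ((ψ⁻¹ : graphAut (repGraph S X Gr p)) : Equiv.Perm (RepVert S X))
      (Sum.inr ⟨j, f, none⟩) = Sum.inr ⟨i, e, none⟩ := by
    rw [← hr]
    simp
  choose φ hφ using gadget_some hα hconn hp hbig hdeg ψ hr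
  choose φ' hφ' using gadget_some hα hconn hp hbig hdeg ψ⁻¹ hr'
  have hleft : ∀ x, φ' (φ x) = x := by
    intro x
    have h1 := hφ' (φ x)
    have h2 : ((ψ⁻¹ : graphAut (repGraph S X Gr p)) : Equiv.Perm (RepVert S X))
        ((ψ : Equiv.Perm (RepVert S X)) (Sum.inr ⟨i, e, some x⟩)) = Sum.inr ⟨i, e, some x⟩ := by
      simp
    rw [hφ x] at h2
    have h3 := h1.symm.trans h2
    simpa using eq_of_heq (Sigma.mk.inj_iff.mp ((Sum.inr.injEq _ _).mp h3)).2
  have hright : ∀ y, φ (φ' y) = y := by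
    intro y
    have h1 := hφ (φ' y)
    have h2 : ((ψ : Equiv.Perm (RepVert S X)))
        (((ψ⁻¹ : graphAut (repGraph S X Gr p)) : Equiv.Perm (RepVert S X))
          (Sum.inr ⟨j, f, some y⟩)) = Sum.inr ⟨j, f, some y⟩ := by
      simp
    rw [hφ' y] at h2
    have h3 := h1.symm.trans h2
    simpa using eq_of_heq (Sigma.mk.inj_iff.mp ((Sum.inr.injEq _ _).mp h3)).2
  have hmapadj : ∀ {ψ₀ : graphAut (repGraph S X Gr p)} {i₀ j₀ : I}
      {e₀ : {e : V × V // S i₀ e.1 e.2}} {f₀ : {e : V × V // S j₀ e.1 e.2}}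
      {φ₀ : X i₀ → X j₀},
      (∀ x : X i₀, (ψ₀ : Equiv.Perm (RepVert S X)) (Sum.inr ⟨i₀, e₀, some x⟩)
        = Sum.inr ⟨j₀, f₀, some (φ₀ x)⟩) →
      ∀ {a b : X i₀}, (Gr i₀).Adj a b → (Gr j₀).Adj (φ₀ a) (φ₀ b) := by
    intro ψ₀ i₀ j₀ e₀ f₀ φ₀ hφ₀ a b hab
    have hadj := (aut_adj ψ₀).mp (RepAdj.copy i₀ e₀ hab : (repGraph S X Gr p).Adj _ _)
    rw [hφ₀ a, hφ₀ b] at hadj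
    rcases adj_some hadj with ⟨y, hy, h2⟩ | ⟨_, h2 | h2⟩
    · have h4 := eq_of_heq (Sigma.mk.inj_iff.mp ((Sum.inr.injEq _ _).mp h2)).2
      simp only [Prod.mk.injEq, Option.some.injEq] at h4
      rwa [h4.2]
    · simp at h2
    · simp at h2
  have hadjiff : ∀ a b : X i, (Gr i).Adj a b ↔ (Gr j).Adj (φ a) (φ b) := by
    intro a b
    constructor
    · exact fun h => hmapadj hφ h
    · intro h
      have h2 := hmapadj hφ' h
      rwa [hleft, hleft] at h2
  obtain rfl : i = j := by
    by_contra hij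
    exact (hdist i j hij).false
      ⟨⟨φ, φ', hleft, hright⟩, by
        intro a b
        rw [Equiv.coe_fn_mk]
        exact (hadjiff a b).symm⟩
  have hid : ∀ x, φ x = x := by
    intro x
    have h := hrigid i ⟨⟨φ, φ', hleft, hright⟩, by
      intro a b
      rw [Equiv.coe_fn_mk]
      exact (hadjiff a b).symm⟩ x
    simpa using h
  refine ⟨f, hr, fun x => by rw [hφ x, hid x], ?_, ?_⟩
  · obtain ⟨w, hw⟩ := aut_inl hα hp hbig hdeg ψ e.val.1
    have hadj := (aut_adj ψ).mp (RepAdj.vr i e : (repGraph S X Gr p).Adj _ _)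
    rw [hw, hr] at hadj
    rw [hw, adj_inl_none hadj]
  · obtain ⟨w, hw⟩ := aut_inl hα hp hbig hdeg ψ e.val.2
    have hadj := (aut_adj ψ).mp (RepAdj.wp i e : (repGraph S X Gr p).Adj _ _)
    have hpv := hφ (p i)
    rw [hid (p i)] at hpv
    rw [hw, hpv] at hadj
    rw [hw, (adj_inl_some hadj).1]

end Classify
end Aux6
section Aux7
variable {I V : Type u} {S : I → V → V → Prop} {X : I → Type u} {Gr : ∀ i, SimpleGraph (X i)}
  {p : ∀ i, X i}

/-- Lift a map of the vertex set of `S` to a map of the vertices of `Γ(S)`. -/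
def liftFun (σ : V → V) (hσ : ∀ (i : I) (e : V × V), S i e.1 e.2 → S i (σ e.1) (σ e.2)) :
    RepVert S X → RepVert S X
  | .inl v => .inl (σ v)
  | .inr ⟨i, e, o⟩ => .inr ⟨i, ⟨(σ e.val.1, σ e.val.2), hσ i e.val e.2⟩, o⟩

lemma liftFun_comp {σ τ : V → V} {hσ : ∀ (i : I) (e : V × V), S i e.1 e.2 → S i (σ e.1) (σ e.2)}
    {hτ : ∀ (i : I) (e : V × V), S i e.1 e.2 → S i (τ e.1) (τ e.2)}
    (hστ : ∀ v, τ (σ v) = v) (a : RepVert S X) :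
    liftFun (X := X) τ hτ (liftFun σ hσ a) = a := by
  match a with
  | .inl v => simp [liftFun, hστ]
  | .inr ⟨i, e, o⟩ =>
      simp only [liftFun, Sum.inr.injEq, Sigma.mk.inj_iff, heq_eq_eq, Prod.mk.injEq, true_and]
      refine ⟨Subtype.ext ?_, trivial⟩
      simp [hστ]

lemma liftFun_adj {σ : V → V} {hσ : ∀ (i : I) (e : V × V), S i e.1 e.2 → S i (σ e.1) (σ e.2)}
    {a b : RepVert S X} (h : (repGraph S X Gr p).Adj a b) :
    (repGraph S X Gr p).Adj (liftFun σ hσ a) (liftFun σ hσ b) := by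
  cases h with
  | copy i e hxy => exact RepAdj.copy i _ hxy
  | rp i e => exact RepAdj.rp i _
  | pr i e => exact RepAdj.pr i _
  | vr i e => exact RepAdj.vr i ⟨(σ e.val.1, σ e.val.2), hσ i e.val e.2⟩
  | rv i e => exact RepAdj.rv i ⟨(σ e.val.1, σ e.val.2), hσ i e.val e.2⟩
  | pw i e => exact RepAdj.pw i ⟨(σ e.val.1, σ e.val.2), hσ i e.val e.2⟩
  | wp i e => exact RepAdj.wp i ⟨(σ e.val.1, σ e.val.2), hσ i e.val e.2⟩

/-- Lift an automorphism of `S` to a permutation of the vertices of `Γ(S)`. -/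
def liftPerm (σ : Equiv.Perm V) (hσ : ∀ (i : I) (v w : V), S i v w ↔ S i (σ v) (σ w)) :
    Equiv.Perm (RepVert S X) where
  toFun := liftFun σ fun i e he => (hσ i e.1 e.2).mp he
  invFun := liftFun σ.symm fun i e he => (hσ i (σ.symm e.1) (σ.symm e.2)).mpr
    (by simpa using he)
  left_inv a := liftFun_comp (fun v => σ.symm_apply_apply v) a
  right_inv a := liftFun_comp (fun v => σ.apply_symm_apply v) a

lemma liftPerm_mem (σ : Equiv.Perm V) (hσ : ∀ (i : I) (v w : V), S i v w ↔ S i (σ v) (σ w)) :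
    liftPerm (X := X) σ hσ ∈ graphAut (repGraph S X Gr p) := by
  intro a b
  constructor
  · exact fun h => liftFun_adj (hσ := fun i e he => (hσ i e.1 e.2).mp he) h
  · intro h
    have hprf : ∀ (i : I) (e : V × V), S i e.1 e.2 → S i (σ.symm e.1) (σ.symm e.2) :=
      fun i e he => (hσ i (σ.symm e.1) (σ.symm e.2)).mpr (by simpa using he)
    have key : ∀ c, liftFun (X := X) (σ.symm : V → V) hprf (liftPerm (X := X) σ hσ c) = c :=
      fun c => liftFun_comp (hσ := fun i e he => (hσ i e.1 e.2).mp he)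
        (fun v => σ.symm_apply_apply v) c
    have h2 := liftFun_adj (Gr := Gr) (p := p) (hσ := hprf) h
    rwa [key, key] at h2

/-- The lifting homomorphism `Aut_I(S) →* Aut(Γ(S))`. -/
def liftHom (S : I → V → V → Prop) (X : I → Type u) (Gr : ∀ i, SimpleGraph (X i))
    (p : ∀ i, X i) : relAut S →* graphAut (repGraph S X Gr p) where
  toFun σ := ⟨liftPerm (X := X) σ.1 σ.2, liftPerm_mem σ.1 σ.2⟩
  map_one' := by
    ext a
    match a with
    | .inl v => rfl
    | .inr ⟨i, e, o⟩ => rfl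
  map_mul' σ τ := by
    ext a
    match a with
    | .inl v => rfl
    | .inr ⟨i, e, o⟩ => rfl

end Aux7
section Aux8
variable {I V : Type u} {S : I → V → V → Prop} {X : I → Type u} {Gr : ∀ i, SimpleGraph (X i)}
  {p : ∀ i, X i}

variable {α : Cardinal.{u}} (hα : 4 ≤ α)
  (hconn : ∀ i, (Gr i).Connected)
  (hp : ∀ i, Cardinal.mk ((Gr i).neighborSet (p i)) = 1)
  (hbig : ∀ (i : I) (x : X i), x ≠ p i → α < Cardinal.mk ((Gr i).neighborSet x))
  (hrigid : ∀ (i : I) (φ : Gr i ≃g Gr i) (x : X i), φ x = x)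
  (hdist : ∀ i j : I, i ≠ j → IsEmpty (Gr i ≃g Gr j))
  (hdeg : ∀ v : V, 4 ≤ relDeg S v ∧ relDeg S v ≤ α)

include hα hconn hp hbig hrigid hdist hdeg

/-- Every automorphism of the replacement graph is the lift of an automorphism of `S`. -/
lemma aut_lift_surj (ψ : graphAut (repGraph S X Gr p)) :
    ∃ σ : relAut S, liftHom S X Gr p σ = ψ := by
  choose σ0 hσ0 using aut_inl hα hp hbig hdeg ψ
  choose τ0 hτ0 using aut_inl hα hp hbig hdeg ψ⁻¹
  have hinv1 : ∀ v, τ0 (σ0 v) = v := by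
    intro v
    have h1 := hτ0 (σ0 v)
    rw [← hσ0 v] at h1
    simp only [InvMemClass.coe_inv, Equiv.Perm.coe_inv, Equiv.symm_apply_apply] at h1
    exact (Sum.inl.inj h1).symm
  have hinv2 : ∀ v, σ0 (τ0 v) = v := by
    intro v
    have h1 := hσ0 (τ0 v)
    rw [← hτ0 v] at h1
    simp only [InvMemClass.coe_inv, Equiv.Perm.coe_inv, Equiv.apply_symm_apply] at h1
    exact (Sum.inl.inj h1).symm
  have hσ : ∀ (i : I) (v w : V), S i v w ↔ S i (σ0 v) (σ0 w) := by
    intro i v w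
    constructor
    · intro h
      obtain ⟨f, h1, h2, h3, h4⟩ := gadget_master hα hconn hp hbig hrigid hdist hdeg ψ i
        ⟨(v, w), h⟩
      have hv : σ0 v = f.val.1 := Sum.inl.inj ((hσ0 v).symm.trans h3)
      have hw : σ0 w = f.val.2 := Sum.inl.inj ((hσ0 w).symm.trans h4)
      rw [hv, hw]
      exact f.2
    · intro h
      obtain ⟨f, h1, h2, h3, h4⟩ := gadget_master hα hconn hp hbig hrigid hdist hdeg ψ⁻¹ i
        ⟨(σ0 v, σ0 w), h⟩
      have hv : v = f.val.1 := by
        have h5 := hτ0 (σ0 v)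
        rw [hinv1 v] at h5
        exact Sum.inl.inj (h5.symm.trans h3)
      have hw : w = f.val.2 := by
        have h5 := hτ0 (σ0 w)
        rw [hinv1 w] at h5
        exact Sum.inl.inj (h5.symm.trans h4)
      rw [hv, hw]
      exact f.2
  refine ⟨⟨⟨σ0, τ0, hinv1, hinv2⟩, hσ⟩, ?_⟩
  apply Subtype.ext
  apply Equiv.ext
  intro a
  match a with
  | .inl v => exact (hσ0 v).symm
  | .inr ⟨i, e, o⟩ =>
      obtain ⟨f, h1, h2, h3, h4⟩ := gadget_master hα hconn hp hbig hrigid hdist hdeg ψ i e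
      have hf1 : σ0 e.val.1 = f.val.1 := Sum.inl.inj ((hσ0 e.val.1).symm.trans h3)
      have hf2 : σ0 e.val.2 = f.val.2 := Sum.inl.inj ((hσ0 e.val.2).symm.trans h4)
      have hfe : (⟨(σ0 e.val.1, σ0 e.val.2), (hσ i e.val.1 e.val.2).mp e.2⟩
          : {e : V × V // S i e.1 e.2}) = f := by
        apply Subtype.ext
        show (σ0 e.val.1, σ0 e.val.2) = f.val
        rw [hf1, hf2]
      match o with
      | none => exact (congrArg (fun z => (Sum.inr ⟨i, z, none⟩ : RepVert S X)) hfe).trans h1.symm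
      | some x =>
          exact (congrArg (fun z => (Sum.inr ⟨i, z, some x⟩ : RepVert S X)) hfe).trans
            (h2 x).symm

end Aux8
end RepAux
/-- **Replacement.** Under the replacement hypotheses, every automorphism `ψ` of the
replacement graph `Γ(S)` maps `V(S)` onto itself, its restriction to `V(S)` is an
automorphism of the `I`-system `S`, `ψ` is completely determined by this restriction, and
the restriction map is a group isomorphism `Aut(Γ(S)) ≅ Aut_I(S)`. -/
theorem replacement_graph_automorphisms {I V : Type u} (S : I → V → V → Prop)
    (X : I → Type u) (Gr : ∀ i, SimpleGraph (X i)) (p : ∀ i, X i)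
    (α : Cardinal.{u}) (hα : 4 ≤ α)
    (hconn : ∀ i, (Gr i).Connected)
    (hp : ∀ i, Cardinal.mk ((Gr i).neighborSet (p i)) = 1)
    (hbig : ∀ (i : I) (x : X i), x ≠ p i → α < Cardinal.mk ((Gr i).neighborSet x))
    (hrigid : ∀ (i : I) (φ : Gr i ≃g Gr i) (x : X i), φ x = x)
    (hdist : ∀ i j : I, i ≠ j → IsEmpty (Gr i ≃g Gr j))
    (hdeg : ∀ v : V, 4 ≤ relDeg S v ∧ relDeg S v ≤ α) :
    (∀ (ψ : graphAut (repGraph S X Gr p)) (v : V),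
        ∃ w : V, (ψ : Equiv.Perm (RepVert S X)) (Sum.inl v) = Sum.inl w) ∧
    (∀ ψ₁ ψ₂ : graphAut (repGraph S X Gr p),
        (∀ v : V, (ψ₁ : Equiv.Perm (RepVert S X)) (Sum.inl v)
          = (ψ₂ : Equiv.Perm (RepVert S X)) (Sum.inl v)) → ψ₁ = ψ₂) ∧
    ∃ F : graphAut (repGraph S X Gr p) ≃* relAut S,
      ∀ (ψ : graphAut (repGraph S X Gr p)) (v : V),
        (ψ : Equiv.Perm (RepVert S X)) (Sum.inl v)
          = Sum.inl (((F ψ : relAut S) : Equiv.Perm V) v) := by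
  have hsurj : Function.Surjective (RepAux.liftHom S X Gr p) := fun ψ =>
    RepAux.aut_lift_surj hα hconn hp hbig hrigid hdist hdeg ψ
  have hinj : Function.Injective (RepAux.liftHom S X Gr p) := by
    intro σ τ h
    apply Subtype.ext
    apply Equiv.ext
    intro v
    have h2 : ((RepAux.liftHom S X Gr p σ : graphAut (repGraph S X Gr p))
        : Equiv.Perm (RepVert S X)) (Sum.inl v)
        = ((RepAux.liftHom S X Gr p τ : graphAut (repGraph S X Gr p))
        : Equiv.Perm (RepVert S X)) (Sum.inl v) := by rw [h]
    exact Sum.inl.inj h2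
  refine ⟨RepAux.aut_inl hα hp hbig hdeg, ?_, ?_⟩
  · intro ψ₁ ψ₂ hagree
    obtain ⟨σ₁, rfl⟩ := hsurj ψ₁
    obtain ⟨σ₂, rfl⟩ := hsurj ψ₂
    refine congrArg _ (Subtype.ext (Equiv.ext fun v => ?_))
    exact Sum.inl.inj (hagree v)
  · refine ⟨(MulEquiv.ofBijective (RepAux.liftHom S X Gr p) ⟨hinj, hsurj⟩).symm, ?_⟩
    intro ψ v
    have h := (MulEquiv.ofBijective (RepAux.liftHom S X Gr p) ⟨hinj, hsurj⟩).apply_symm_apply ψ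
    exact (congrArg (fun g => ((g : graphAut (repGraph S X Gr p))
      : Equiv.Perm (RepVert S X)) (Sum.inl v)) h).symm
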